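/- Dinkelbach characterization of fractional programming: let f, g be continuous real-valued functions on a nonempty compact set X with g(x) > 0 for all x ∈ X, and let λ* = min_{x∈X} f(x)/g(x). Then min_{x∈X} (f(x) − λ* g(x)) = 0, and a point x* ∈ X minimizes f/g over X if and only if f(x*) − λ* g(x*) = 0. -/
import Mathlib


/-- Dinkelbach characterization of fractional programming: let `f, g` be continuous
real-valued functions on a nonempty compact set `X ⊆ ℝⁿ` with `g > 0` on `X`, and let
`λ* = min_{x∈X} f(x)/g(x)`. Then `min_{x∈X} (f(x) − λ* g(x)) = 0`, and a point
`x* ∈ X` minimizes `f/g` over `X` iff `f(x*) − λ* g(x*) = 0`. -/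
theorem dinkelbach_characterization {n : ℕ} (X : Set (Fin n → ℝ)) (f g : (Fin n → ℝ) → ℝ)
    (hX : X.Nonempty) (hXc : IsCompact X)
    (hf : ContinuousOn f X) (hg : ContinuousOn g X)
    (hgpos : ∀ x ∈ X, 0 < g x)
    (lam : ℝ) (hlam : IsLeast ((fun x => f x / g x) '' X) lam) :
    IsLeast ((fun x => f x - lam * g x) '' X) 0 ∧
    ∀ x ∈ X, (f x / g x = lam ↔ f x - lam * g x = 0) := by
  obtain ⟨⟨x0, hx0, hx0eq⟩, hlb⟩ := hlam
  have key : ∀ x ∈ X, (f x / g x = lam ↔ f x - lam * g x = 0) := by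
    intro x hx
    have hgx := hgpos x hx
    rw [div_eq_iff hgx.ne', sub_eq_zero]
  refine ⟨⟨⟨x0, hx0, ?_⟩, ?_⟩, key⟩
  · exact (key x0 hx0).mp hx0eq
  · rintro y ⟨x, hx, rfl⟩
    have hgx := hgpos x hx
    have h1 : lam ≤ f x / g x := hlb ⟨x, hx, rfl⟩
    have h2 : lam * g x ≤ f x := (le_div_iff₀ hgx).mp h1
    simp only
    linarith
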